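/- Fix b > 0, N, n ∈ ℕ with n ≤ N, and γ_1, γ_2 ∈ ℝ with γ_1 − γ_2 > N and γ_1 − γ_2 not an integer. Define W_1(m) = (−b)^m / (m! · Γ(m + γ_1 − γ_2 + 1) · Γ(N − m − γ_1 + γ_2 + 1)) for m ∈ ℕ, W_2(m) = (−b)^m / (Γ(m + γ_2 − γ_1 + 1) · m! · (N − m)!) for 0 ≤ m ≤ N, and P : ℝ → ℝ by P(x) = Σ_{j=0}^{n} (−1)^j C(n,j) (−b)^(−j) · Π_{i=0}^{j−1} [(x − γ_1 − i)(x − γ_2 − i)] · Π_{i=0}^{n−j−1} (N − x + γ_2 − i). Then: (i) each of the two families of weights has constant sign, i.e. W_1(m)·W_1(m') > 0 for all m, m' ∈ ℕ and W_2(m)·W_2(m') > 0 for all 0 ≤ m, m' ≤ N; (ii) P is the evaluation of a real polynomial of degree exactly 2n; (iii) for every natural number k < n, the series Σ_{m=0}^{∞} P(γ_1 + m)(γ_1 + m)^k W_1(m) converges with sum 0, and Σ_{m=0}^{N} P(γ_2 + m)(γ_2 + m)^k W_2(m) = 0. -/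

import Mathlib

open Finset

noncomputable section StmtAux14
namespace StmtAux14

lemma gamma_prod (x : ℝ) (j : ℕ) (hx : ∀ i : ℕ, i < j → x - i ≠ 0) :
    Real.Gamma (x + 1) = (∏ i ∈ Finset.range j, (x - i)) * Real.Gamma (x + 1 - j) := by
  induction j with
  | zero => simp
  | succ j ih =>
    have h0 : x + 1 - (j : ℝ) = (x - j) + 1 := by ring
    have h1 : x + 1 - ((j + 1 : ℕ) : ℝ) = x - j := by push_cast; ring
    rw [ih (fun i hi => hx i (hi.trans (Nat.lt_succ_self j))), Finset.prod_range_succ, h1, h0,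
      Real.Gamma_add_one (hx j (Nat.lt_succ_self j))]
    ring

lemma gamma_add_nat (x : ℝ) (hx : 0 < x) (j : ℕ) :
    Real.Gamma (x + j) = (∏ i ∈ Finset.range j, (x + i)) * Real.Gamma x := by
  induction j with
  | zero => simp
  | succ j ih =>
    have h1 : x + ((j + 1 : ℕ) : ℝ) = (x + j) + 1 := by push_cast; ring
    have h2 : x + (j : ℝ) ≠ 0 := by positivity
    rw [h1, Real.Gamma_add_one h2, ih, Finset.prod_range_succ]
    ring

lemma gamma_nonint_ne (c : ℝ) (hcZ : ∀ z : ℤ, c ≠ z) (r : ℝ) (z : ℤ) (hr : r = z + c) :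
    Real.Gamma r ≠ 0 := by
  apply Real.Gamma_ne_zero
  intro m h
  exact hcZ (-(m : ℤ) - z) (by push_cast; rw [hr] at h; linarith)

/-- weight on lattice 1 -/
def V₁ (b c : ℝ) (N : ℕ) (m : ℕ) : ℝ :=
  (-b) ^ m / ((m.factorial : ℝ) * Real.Gamma ((m : ℝ) + c + 1) * Real.Gamma ((N : ℝ) - m - c + 1))

/-- weight on lattice 2 -/
def V₂ (b c : ℝ) (N : ℕ) (m : ℕ) : ℝ :=
  (-b) ^ m / (Real.Gamma ((m : ℝ) - c + 1) * (m.factorial : ℝ) * ((N - m).factorial : ℝ))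

/-- shifted weight on lattice 1 (with D = N - n) -/
def g₁ (b c : ℝ) (D : ℕ) (s : ℤ) : ℝ :=
  (-b) ^ s / (Real.Gamma ((s : ℝ) + 1) * Real.Gamma ((s : ℝ) + c + 1) *
    Real.Gamma ((D : ℝ) - s - c + 1))

/-- shifted weight on lattice 2 (with D = N - n) -/
def g₂ (b c : ℝ) (D : ℕ) (s : ℤ) : ℝ :=
  (-b) ^ s / (Real.Gamma ((s : ℝ) - c + 1) * Real.Gamma ((s : ℝ) + 1) *
    Real.Gamma ((D : ℝ) - s + 1))

lemma gamma_int_nonpos {x : ℝ} (z : ℤ) (hz : z ≤ 0) (hx : x = z) : Real.Gamma x = 0 := by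
  rw [Real.Gamma_eq_zero_iff]
  exact ⟨(-z).toNat, by rw [hx]; exact_mod_cast (by omega : z = -(((-z).toNat : ℤ)))⟩

lemma g₁_neg (b c : ℝ) (D : ℕ) (s : ℤ) (hs : s < 0) : g₁ b c D s = 0 := by
  unfold g₁
  rw [gamma_int_nonpos (x := (s:ℝ) + 1) (s + 1) (by omega) (by push_cast; ring), zero_mul, zero_mul, div_zero]

lemma g₂_neg (b c : ℝ) (D : ℕ) (s : ℤ) (hs : s < 0) : g₂ b c D s = 0 := by
  unfold g₂
  rw [gamma_int_nonpos (x := (s:ℝ) + 1) (s + 1) (by omega) (by push_cast; ring), mul_zero, zero_mul, div_zero]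

lemma g₂_big (b c : ℝ) (D : ℕ) (s : ℤ) (hs : (D : ℤ) < s) : g₂ b c D s = 0 := by
  unfold g₂
  rw [gamma_int_nonpos (x := (D:ℝ) - s + 1) ((D : ℤ) - s + 1) (by omega) (by push_cast; ring), mul_zero, div_zero]

lemma prod_div_factorial (m j : ℕ) :
    (∏ i ∈ Finset.range j, ((m : ℝ) - i)) / (m.factorial : ℝ) =
      1 / Real.Gamma ((m : ℝ) - j + 1) := by
  rcases le_or_gt j m with h | h
  · have hx : ∀ i : ℕ, i < j → (m : ℝ) - i ≠ 0 := by
      intro i hi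
      have h2 : (i : ℝ) < m := by exact_mod_cast lt_of_lt_of_le hi h
      linarith
    have hgp := gamma_prod (m : ℝ) j hx
    rw [Real.Gamma_nat_eq_factorial] at hgp
    have harg : (m : ℝ) + 1 - j = (m : ℝ) - j + 1 := by ring
    rw [harg] at hgp
    have hne : Real.Gamma ((m : ℝ) - j + 1) ≠ 0 := by
      have hj : (j : ℝ) ≤ m := by exact_mod_cast h
      exact (Real.Gamma_pos_of_pos (by linarith)).ne'
    have hm : (m.factorial : ℝ) ≠ 0 := by positivity
    rw [div_eq_div_iff hm hne, one_mul, hgp]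
  · rw [Finset.prod_eq_zero (Finset.mem_range.2 h) (by simp), zero_div,
      gamma_int_nonpos (x := (m:ℝ) - j + 1) ((m : ℤ) - j + 1) (by omega) (by push_cast; ring), div_zero]


lemma V₁_rec (b c : ℝ) (N : ℕ) (hc : (N : ℝ) < c) (hcZ : ∀ z : ℤ, c ≠ z) (m : ℕ) :
    V₁ b c N (m + 1) = ((-b) * ((N : ℝ) - m - c) / (((m : ℝ) + 1) * ((m : ℝ) + c + 1))) *
      V₁ b c N m := by
  have hcpos : (0 : ℝ) < c := lt_of_le_of_lt (Nat.cast_nonneg N) hc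
  have h1 : ((m + 1 : ℕ) : ℝ) + c + 1 = ((m : ℝ) + c + 1) + 1 := by push_cast; ring
  have h2 : (N : ℝ) - ((m + 1 : ℕ) : ℝ) - c + 1 = (N : ℝ) - m - c := by push_cast; ring
  have h3 : (N : ℝ) - (m : ℝ) - c + 1 = ((N : ℝ) - m - c) + 1 := by ring
  have hne1 : (m : ℝ) + c + 1 ≠ 0 := by positivity
  have hne2 : (N : ℝ) - m - c ≠ 0 := by
    intro h
    exact hcZ ((N : ℤ) - m) (by push_cast; linarith)
  unfold V₁
  rw [h1, h2, Real.Gamma_add_one hne1, h3, Real.Gamma_add_one hne2]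
  have hfe : ((m + 1).factorial : ℝ) = ((m : ℝ) + 1) * m.factorial := by
    rw [Nat.factorial_succ]; push_cast; ring
  rw [hfe, pow_succ]
  have hg1 : Real.Gamma ((m : ℝ) + c + 1) ≠ 0 := by positivity
  have hg2 : Real.Gamma ((N : ℝ) - m - c) ≠ 0 :=
    gamma_nonint_ne (-c) (fun z hz => hcZ (-z) (by push_cast; push_cast at hz; linarith))
      _ ((N : ℤ) - m) (by push_cast; ring)
  have hm1 : ((m : ℝ) + 1) ≠ 0 := by positivity
  have hmf : (m.factorial : ℝ) ≠ 0 := by positivity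
  field_simp

lemma V₁_sign (b c : ℝ) (hb : 0 < b) (N : ℕ) (hc : (N : ℝ) < c) (hcZ : ∀ z : ℤ, c ≠ z)
    (m m' : ℕ) : 0 < V₁ b c N m * V₁ b c N m' := by
  have hcpos : (0 : ℝ) < c := lt_of_le_of_lt (Nat.cast_nonneg N) hc
  have hρ : ∀ m : ℕ, 0 < (-b) * ((N : ℝ) - m - c) / (((m : ℝ) + 1) * ((m : ℝ) + c + 1)) := by
    intro m
    apply div_pos
    · have h1 : (N : ℝ) - m - c < 0 := by
        have : (0 : ℝ) ≤ m := Nat.cast_nonneg m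
        linarith
      nlinarith
    · positivity
  have h0 : V₁ b c N 0 ≠ 0 := by
    unfold V₁
    simp only [pow_zero, Nat.factorial_zero, Nat.cast_one, Nat.cast_zero]
    rw [one_mul]
    apply div_ne_zero one_ne_zero
    apply mul_ne_zero
    · exact (Real.Gamma_pos_of_pos (by linarith)).ne'
    · exact gamma_nonint_ne (-c) (fun z hz => hcZ (-z) (by push_cast; push_cast at hz; linarith))
        _ ((N : ℤ) + 1) (by push_cast; ring)
  have key : ∀ m : ℕ, 0 < V₁ b c N m * V₁ b c N 0 := by
    intro m
    induction m with
    | zero => exact mul_self_pos.2 h0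
    | succ m ih =>
      rw [V₁_rec b c N hc hcZ m, mul_assoc]
      exact mul_pos (hρ m) ih
  have h1 := mul_pos (key m) (key m')
  have h2 : (0 : ℝ) < V₁ b c N 0 * V₁ b c N 0 := mul_self_pos.2 h0
  nlinarith
lemma V₂_rec (b c : ℝ) (N : ℕ) (hc : (N : ℝ) < c) (hcZ : ∀ z : ℤ, c ≠ z) (m : ℕ)
    (hm : m < N) :
    V₂ b c N (m + 1) = ((-b) * ((N : ℝ) - m) / (((m : ℝ) + 1) * ((m : ℝ) + 1 - c))) *
      V₂ b c N m := by
  have h1 : ((m + 1 : ℕ) : ℝ) - c + 1 = ((m : ℝ) - c + 1) + 1 := by push_cast; ring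
  have hne1 : (m : ℝ) - c + 1 ≠ 0 := by
    intro h
    exact hcZ ((m : ℤ) + 1) (by push_cast; linarith)
  have hsub : N - m = (N - (m + 1)) + 1 := by omega
  have hfe2 : ((N - m).factorial : ℝ) = ((N : ℝ) - m) * ((N - (m + 1)).factorial : ℝ) := by
    rw [hsub, Nat.factorial_succ]
    push_cast [Nat.cast_sub (by omega : m + 1 ≤ N)]
    ring
  have hfe : ((m + 1).factorial : ℝ) = ((m : ℝ) + 1) * m.factorial := by
    rw [Nat.factorial_succ]; push_cast; ring
  unfold V₂
  rw [h1, Real.Gamma_add_one hne1, hfe, hfe2, pow_succ]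
  have hg1 : Real.Gamma ((m : ℝ) - c + 1) ≠ 0 :=
    gamma_nonint_ne (-c) (fun z hz => hcZ (-z) (by push_cast; linarith))
      _ ((m : ℤ) + 1) (by push_cast; ring)
  have hm1 : ((m : ℝ) + 1) ≠ 0 := by positivity
  have hmf : (m.factorial : ℝ) ≠ 0 := by positivity
  have hnf : ((N - (m + 1)).factorial : ℝ) ≠ 0 := by positivity
  have hNm : (N : ℝ) - m ≠ 0 := by
    have : (m : ℝ) < N := by exact_mod_cast hm
    linarith
  have hmc : (m : ℝ) + 1 - c ≠ 0 := fun h => hne1 (by linarith)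
  field_simp
  ring

lemma V₂_sign (b c : ℝ) (hb : 0 < b) (N : ℕ) (hc : (N : ℝ) < c) (hcZ : ∀ z : ℤ, c ≠ z)
    (m m' : ℕ) (hm : m ≤ N) (hm' : m' ≤ N) : 0 < V₂ b c N m * V₂ b c N m' := by
  have hρ : ∀ m : ℕ, m < N → 0 < (-b) * ((N : ℝ) - m) / (((m : ℝ) + 1) * ((m : ℝ) + 1 - c)) := by
    intro m hmN
    have hm1 : (m : ℝ) < N := by exact_mod_cast hmN
    have hm2 : (m : ℝ) + 1 ≤ N := by
      have : (m : ℝ) + 1 ≤ N := by exact_mod_cast hmN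
      linarith
    rw [div_pos_iff]
    right
    constructor
    · nlinarith
    · nlinarith
  have h0 : V₂ b c N 0 ≠ 0 := by
    unfold V₂
    simp only [pow_zero, Nat.factorial_zero, Nat.cast_one, Nat.cast_zero, Nat.sub_zero]
    apply div_ne_zero one_ne_zero
    apply mul_ne_zero
    apply mul_ne_zero
    · exact gamma_nonint_ne (-c) (fun z hz => hcZ (-z) (by push_cast; linarith))
        _ 1 (by push_cast; ring)
    · exact one_ne_zero
    · positivity
  have key : ∀ m : ℕ, m ≤ N → 0 < V₂ b c N m * V₂ b c N 0 := by
    intro m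
    induction m with
    | zero => exact fun _ => mul_self_pos.2 h0
    | succ m ih =>
      intro hmN
      rw [V₂_rec b c N hc hcZ m (by omega), mul_assoc]
      exact mul_pos (hρ m (by omega)) (ih (by omega))
  have h1 := mul_pos (key m hm) (key m' hm')
  have h2 : (0 : ℝ) < V₂ b c N 0 * V₂ b c N 0 := mul_self_pos.2 h0
  nlinarith
lemma alt_sum_eval (n : ℕ) : ∀ (p : Polynomial ℝ), p.degree < (n : ℕ) →
    ∑ j ∈ Finset.range (n + 1), (-1 : ℝ) ^ j * (n.choose j : ℝ) * p.eval (j : ℝ) = 0 := by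
  induction n with
  | zero =>
    intro p hp
    have hp0 : p = 0 := by
      rw [← Polynomial.degree_eq_bot]
      exact Nat.WithBot.lt_zero_iff.1 (by exact_mod_cast hp)
    simp [hp0]
  | succ n ih =>
    intro p hp
    by_cases hp0 : p = 0
    · simp [hp0]
    · set q : Polynomial ℝ := p.comp (Polynomial.X + Polynomial.C 1) - p with hq
      have hqeval : ∀ x : ℝ, q.eval x = p.eval (x + 1) - p.eval x := by
        intro x
        simp [hq, Polynomial.eval_comp]
      have hXC : (Polynomial.X + Polynomial.C (1:ℝ)).natDegree = 1 :=
        Polynomial.natDegree_X_add_C 1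
      have hlead : (p.comp (Polynomial.X + Polynomial.C 1)).leadingCoeff = p.leadingCoeff := by
        rw [Polynomial.leadingCoeff_comp (by rw [hXC]; norm_num),
          (Polynomial.monic_X_add_C (1 : ℝ)).leadingCoeff, one_pow, mul_one]
      have hcomp_ne : p.comp (Polynomial.X + Polynomial.C 1) ≠ 0 := by
        intro h
        apply hp0
        rw [← Polynomial.leadingCoeff_eq_zero, ← hlead, h, Polynomial.leadingCoeff_zero]
      have hdeg : (p.comp (Polynomial.X + Polynomial.C 1)).degree = p.degree := by
        rw [Polynomial.degree_eq_natDegree hcomp_ne, Polynomial.degree_eq_natDegree hp0,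
          Polynomial.natDegree_comp, hXC, mul_one]
      have hqdeg : q.degree < (n : ℕ) := by
        have h1 : q.degree < p.degree := by
          have := Polynomial.degree_sub_lt hdeg hcomp_ne hlead
          rwa [hdeg] at this
        have h2 : p.degree ≤ (n : ℕ) := by
          rw [Polynomial.degree_eq_natDegree hp0] at hp ⊢
          exact_mod_cast Nat.lt_succ_iff.1 (by exact_mod_cast hp)
        exact lt_of_lt_of_le h1 h2
      have hihq := ih q hqdeg
      -- now the combinatorial manipulation
      have hsplit : ∑ j ∈ Finset.range (n + 2), (-1 : ℝ) ^ j * ((n+1).choose j : ℝ) * p.eval (j : ℝ)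
          = (∑ i ∈ Finset.range (n + 1),
              (-((-1 : ℝ) ^ i * (n.choose i : ℝ) * p.eval ((i : ℝ) + 1))
               + -((-1 : ℝ) ^ i * (n.choose (i+1) : ℝ) * p.eval ((i : ℝ) + 1))))
            + p.eval 0 := by
        rw [Finset.sum_range_succ' (fun j => (-1 : ℝ) ^ j * ((n+1).choose j : ℝ) * p.eval (j : ℝ)) (n+1)]
        simp only [Nat.choose_succ_succ]
        push_cast
        congr 1
        · apply Finset.sum_congr rfl
          intro i _
          push_cast
          ring
        · simp
      have hsecond : ∑ i ∈ Finset.range (n + 1), (-1 : ℝ) ^ i * (n.choose (i+1) : ℝ) * p.eval ((i : ℝ) + 1)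
          = -(∑ j ∈ Finset.range (n + 1), (-1 : ℝ) ^ j * (n.choose j : ℝ) * p.eval (j : ℝ)) + p.eval 0 := by
        have h3 : ∑ j ∈ Finset.range (n + 2), (-1 : ℝ) ^ j * (n.choose j : ℝ) * p.eval (j : ℝ)
            = (∑ i ∈ Finset.range (n + 1), (-1 : ℝ) ^ (i+1) * (n.choose (i+1) : ℝ) * p.eval ((i+1 : ℕ) : ℝ))
              + (-1 : ℝ) ^ 0 * (n.choose 0 : ℝ) * p.eval ((0 : ℕ) : ℝ) :=
          Finset.sum_range_succ' _ (n+1)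
        have h4 : ∑ j ∈ Finset.range (n + 2), (-1 : ℝ) ^ j * (n.choose j : ℝ) * p.eval (j : ℝ)
            = ∑ j ∈ Finset.range (n + 1), (-1 : ℝ) ^ j * (n.choose j : ℝ) * p.eval (j : ℝ) := by
          rw [Finset.sum_range_succ]
          simp [Nat.choose_succ_self]
        rw [h4] at h3
        have h5 : ∀ i : ℕ, (-1 : ℝ) ^ (i+1) * (n.choose (i+1) : ℝ) * p.eval ((i+1 : ℕ) : ℝ)
            = -((-1 : ℝ) ^ i * (n.choose (i+1) : ℝ) * p.eval ((i : ℝ) + 1)) := by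
          intro i; push_cast; ring
        simp only [h5] at h3
        rw [Finset.sum_neg_distrib] at h3
        simp only [pow_zero, Nat.choose_zero_right, Nat.cast_one, Nat.cast_zero, one_mul] at h3
        linarith
      have hfirst : ∑ i ∈ Finset.range (n + 1), (-1 : ℝ) ^ i * (n.choose i : ℝ) * p.eval ((i : ℝ) + 1)
          = ∑ i ∈ Finset.range (n + 1), ((-1 : ℝ) ^ i * (n.choose i : ℝ) * p.eval (i : ℝ)
              + (-1 : ℝ) ^ i * (n.choose i : ℝ) * q.eval (i : ℝ)) := by
        apply Finset.sum_congr rfl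
        intro i _
        rw [hqeval]
        ring
      rw [hsplit]
      rw [Finset.sum_add_distrib, Finset.sum_neg_distrib, Finset.sum_neg_distrib, hfirst, hsecond,
        Finset.sum_add_distrib]
      have : ∑ i ∈ Finset.range (n + 1), (-1 : ℝ) ^ i * (n.choose i : ℝ) * q.eval (i : ℝ) = 0 := hihq
      rw [this]
      ring

lemma alt_sum_pow (n k : ℕ) (hk : k < n) (x : ℝ) :
    ∑ j ∈ Finset.range (n + 1), (-1 : ℝ) ^ j * (n.choose j : ℝ) * (x + j) ^ k = 0 := by
  have h := alt_sum_eval n ((Polynomial.X + Polynomial.C x) ^ k) (by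
    rw [Polynomial.degree_pow, Polynomial.degree_X_add_C]
    calc (k : WithBot ℕ) • 1 = (k : WithBot ℕ) := by simp
    _ < (n : ℕ) := by exact_mod_cast hk)
  simp only [Polynomial.eval_pow, Polynomial.eval_add, Polynomial.eval_X, Polynomial.eval_C] at h
  rw [← h]
  apply Finset.sum_congr rfl
  intro j _
  ring_nf
set_option maxHeartbeats 1000000 in
lemma rodrigues₁ (b c : ℝ) (hb : 0 < b) (N n : ℕ) (hnN : n ≤ N) (hc : (N : ℝ) < c)
    (hcZ : ∀ z : ℤ, c ≠ z) (m j : ℕ) (hj : j ≤ n) :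
    (-1 : ℝ) ^ j * (n.choose j : ℝ) * (-b) ^ (-(j : ℤ)) *
      (∏ i ∈ Finset.range j, (((m : ℝ) - i) * ((m : ℝ) + c - i))) *
      (∏ i ∈ Finset.range (n - j), ((N : ℝ) - m - c - i)) * V₁ b c N m
    = (-1 : ℝ) ^ j * (n.choose j : ℝ) * g₁ b c (N - n) ((m : ℤ) - j) := by
  have hcZ' : ∀ z : ℤ, -c ≠ (z : ℝ) := fun z hz => hcZ (-z) (by push_cast; linarith)
  have hcpos : (0 : ℝ) < c := lt_of_le_of_lt (Nat.cast_nonneg N) hc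
  rcases lt_or_ge m j with hmj | hmj
  · rw [Finset.prod_eq_zero (Finset.mem_range.2 hmj)
      (by simp : ((m : ℝ) - (m : ℕ)) * ((m : ℝ) + c - (m : ℕ)) = 0),
      g₁_neg b c (N - n) _ (by omega)]
    ring
  · -- j ≤ m : everything nonzero
    rw [Finset.prod_mul_distrib]
    have hA : (m.factorial : ℝ) = (∏ i ∈ Finset.range j, ((m : ℝ) - i)) *
        Real.Gamma ((m : ℝ) - j + 1) := by
      have hx : ∀ i : ℕ, i < j → (m : ℝ) - i ≠ 0 := by
        intro i hi
        have h2 : (i : ℝ) < m := by exact_mod_cast lt_of_lt_of_le hi hmj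
        linarith
      have := gamma_prod (m : ℝ) j hx
      rw [Real.Gamma_nat_eq_factorial, show (m : ℝ) + 1 - j = (m : ℝ) - j + 1 from by ring] at this
      exact this
    have hB : Real.Gamma ((m : ℝ) + c + 1) = (∏ i ∈ Finset.range j, ((m : ℝ) + c - i)) *
        Real.Gamma ((m : ℝ) + c + 1 - j) := by
      have hx : ∀ i : ℕ, i < j → (m : ℝ) + c - i ≠ 0 := by
        intro i hi h
        exact hcZ ((i : ℤ) - m) (by push_cast; linarith)
      exact gamma_prod ((m : ℝ) + c) j hx
    have hC : Real.Gamma ((N : ℝ) - m - c + 1) =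
        (∏ i ∈ Finset.range (n - j), ((N : ℝ) - m - c - i)) *
        Real.Gamma ((N : ℝ) - m - c + 1 - (n - j : ℕ)) := by
      have hx : ∀ i : ℕ, i < n - j → (N : ℝ) - m - c - i ≠ 0 := by
        intro i hi h
        exact hcZ ((N : ℤ) - m - i) (by push_cast; linarith)
      exact gamma_prod ((N : ℝ) - m - c) (n - j) hx
    have hΓ0 : Real.Gamma ((m : ℝ) - j + 1) ≠ 0 := by
      have hjm : (j : ℝ) ≤ m := by exact_mod_cast hmj
      exact (Real.Gamma_pos_of_pos (by linarith)).ne'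
    have hΓ1 : Real.Gamma ((m : ℝ) + c + 1 - j) ≠ 0 :=
      gamma_nonint_ne c hcZ _ ((m : ℤ) + 1 - j) (by push_cast; ring)
    have hΓ2 : Real.Gamma ((N : ℝ) - m - c + 1 - (n - j : ℕ)) ≠ 0 :=
      gamma_nonint_ne (-c) hcZ' _ ((N : ℤ) - m + 1 - ((n : ℤ) - j))
        (by push_cast [Nat.cast_sub hj]; ring)
    have hPa : (∏ i ∈ Finset.range j, ((m : ℝ) - i)) ≠ 0 := by
      rw [Finset.prod_ne_zero_iff]
      intro i hi h
      have h2 : (i : ℝ) < m := by exact_mod_cast lt_of_lt_of_le (Finset.mem_range.1 hi) hmj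
      linarith
    have hPb : (∏ i ∈ Finset.range j, ((m : ℝ) + c - i)) ≠ 0 := by
      rw [Finset.prod_ne_zero_iff]
      intro i _ h
      exact hcZ ((i : ℤ) - m) (by push_cast; linarith)
    have hPc : (∏ i ∈ Finset.range (n - j), ((N : ℝ) - m - c - i)) ≠ 0 := by
      rw [Finset.prod_ne_zero_iff]
      intro i _ h
      exact hcZ ((N : ℤ) - m - i) (by push_cast; linarith)
    have hbne : (-b) ^ j ≠ 0 := pow_ne_zero _ (by simp [hb.ne'])
    have hsplit : V₁ b c N m = (-b) ^ m * (1 / (m.factorial : ℝ)) *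
        (1 / Real.Gamma ((m : ℝ) + c + 1)) * (1 / Real.Gamma ((N : ℝ) - m - c + 1)) := by
      unfold V₁
      rw [div_eq_mul_inv, mul_inv, mul_inv]
      ring
    have e1 : (∏ i ∈ Finset.range j, ((m : ℝ) - i)) * (1 / (m.factorial : ℝ))
        = 1 / Real.Gamma ((m : ℝ) - j + 1) := by
      rw [mul_one_div]; exact prod_div_factorial m j
    have e2 : (∏ i ∈ Finset.range j, ((m : ℝ) + c - i)) * (1 / Real.Gamma ((m : ℝ) + c + 1))
        = 1 / Real.Gamma ((m : ℝ) + c + 1 - j) := by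
      rw [hB, mul_one_div, div_eq_div_iff (mul_ne_zero hPb hΓ1) hΓ1]
      ring
    have e3 : (∏ i ∈ Finset.range (n - j), ((N : ℝ) - m - c - i)) *
        (1 / Real.Gamma ((N : ℝ) - m - c + 1))
        = 1 / Real.Gamma ((N : ℝ) - m - c + 1 - (n - j : ℕ)) := by
      rw [hC, mul_one_div, div_eq_div_iff (mul_ne_zero hPc hΓ2) hΓ2]
      ring
    have e4 : g₁ b c (N - n) ((m : ℤ) - j) = (-b) ^ m * ((-b) ^ j)⁻¹ *
        ((1 / Real.Gamma ((m : ℝ) - j + 1)) * (1 / Real.Gamma ((m : ℝ) + c + 1 - j)) *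
         (1 / Real.Gamma ((N : ℝ) - m - c + 1 - (n - j : ℕ)))) := by
      unfold g₁
      rw [zpow_sub₀ (by simp [hb.ne'] : (-b) ≠ 0), zpow_natCast, zpow_natCast]
      rw [show (((m : ℤ) - j : ℤ) : ℝ) = (m : ℝ) - j from by push_cast; ring]
      rw [show (m : ℝ) - j + c + 1 = (m : ℝ) + c + 1 - j from by ring]
      rw [show ((N - n : ℕ) : ℝ) - ((m : ℝ) - j) - c + 1
          = (N : ℝ) - m - c + 1 - (n - j : ℕ) from by
        push_cast [Nat.cast_sub hj, Nat.cast_sub hnN]; ring]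
      rw [div_div, div_eq_mul_inv, mul_inv, mul_inv, mul_inv]
      ring
    rw [zpow_neg, zpow_natCast, hsplit, e4]
    linear_combination
      (((-1 : ℝ)^j * (n.choose j : ℝ)) * ((-b)^m * ((-b)^j)⁻¹) *
        ((∏ i ∈ Finset.range j, ((m : ℝ) + c - i)) * (1 / Real.Gamma ((m : ℝ) + c + 1))) *
        ((∏ i ∈ Finset.range (n - j), ((N : ℝ) - m - c - i)) *
          (1 / Real.Gamma ((N : ℝ) - m - c + 1)))) * e1 +
      (((-1 : ℝ)^j * (n.choose j : ℝ)) * ((-b)^m * ((-b)^j)⁻¹) *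
        (1 / Real.Gamma ((m : ℝ) - j + 1)) *
        ((∏ i ∈ Finset.range (n - j), ((N : ℝ) - m - c - i)) *
          (1 / Real.Gamma ((N : ℝ) - m - c + 1)))) * e2 +
      (((-1 : ℝ)^j * (n.choose j : ℝ)) * ((-b)^m * ((-b)^j)⁻¹) *
        (1 / Real.Gamma ((m : ℝ) - j + 1)) *
        (1 / Real.Gamma ((m : ℝ) + c + 1 - j))) * e3

set_option maxHeartbeats 1000000 in
lemma rodrigues₂ (b c : ℝ) (hb : 0 < b) (N n : ℕ) (hnN : n ≤ N) (hc : (N : ℝ) < c)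
    (hcZ : ∀ z : ℤ, c ≠ z) (m j : ℕ) (hj : j ≤ n) (hm : m ≤ N) :
    (-1 : ℝ) ^ j * (n.choose j : ℝ) * (-b) ^ (-(j : ℤ)) *
      (∏ i ∈ Finset.range j, (((m : ℝ) - c - i) * ((m : ℝ) - i))) *
      (∏ i ∈ Finset.range (n - j), ((N : ℝ) - m - i)) * V₂ b c N m
    = (-1 : ℝ) ^ j * (n.choose j : ℝ) * g₂ b c (N - n) ((m : ℤ) - j) := by
  have hcZ' : ∀ z : ℤ, -c ≠ (z : ℝ) := fun z hz => hcZ (-z) (by push_cast; linarith)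
  rcases lt_or_ge m j with hmj | hmj
  · rw [Finset.prod_eq_zero (Finset.mem_range.2 hmj)
      (by simp : ((m : ℝ) - c - (m : ℕ)) * ((m : ℝ) - (m : ℕ)) = 0),
      g₂_neg b c (N - n) _ (by omega)]
    ring
  rcases lt_or_ge (N - m) (n - j) with hnm | hnm
  · rw [Finset.prod_eq_zero (Finset.mem_range.2 hnm)
      (by push_cast [Nat.cast_sub hm]; ring : (N : ℝ) - m - ((N - m : ℕ) : ℝ) = 0),
      g₂_big b c (N - n) _ (by omega)]
    ring
  · rw [Finset.prod_mul_distrib]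
    have hB : Real.Gamma ((m : ℝ) - c + 1) = (∏ i ∈ Finset.range j, ((m : ℝ) - c - i)) *
        Real.Gamma ((m : ℝ) - c + 1 - j) := by
      have hx : ∀ i : ℕ, i < j → (m : ℝ) - c - i ≠ 0 := by
        intro i hi h
        exact hcZ ((m : ℤ) - i) (by push_cast; linarith)
      exact gamma_prod ((m : ℝ) - c) j hx
    have hΓ0 : Real.Gamma ((m : ℝ) - j + 1) ≠ 0 := by
      have hjm : (j : ℝ) ≤ m := by exact_mod_cast hmj
      exact (Real.Gamma_pos_of_pos (by linarith)).ne'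
    have hΓ1 : Real.Gamma ((m : ℝ) - c + 1 - j) ≠ 0 :=
      gamma_nonint_ne (-c) hcZ' _ ((m : ℤ) + 1 - j) (by push_cast; ring)
    have hΓ2 : Real.Gamma ((N : ℝ) - m - (n - j : ℕ) + 1) ≠ 0 := by
      have h1 : (n - j : ℕ) ≤ (N : ℝ) - m + 1 - 1 := by
        have : ((n - j : ℕ) : ℝ) ≤ ((N - m : ℕ) : ℝ) := by exact_mod_cast hnm
        rw [Nat.cast_sub hm] at this
        linarith
      exact (Real.Gamma_pos_of_pos (by linarith)).ne'
    have hPa : (∏ i ∈ Finset.range j, ((m : ℝ) - c - i)) ≠ 0 := by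
      rw [Finset.prod_ne_zero_iff]
      intro i _ h
      exact hcZ ((m : ℤ) - i) (by push_cast; linarith)
    have hsplit : V₂ b c N m = (-b) ^ m * (1 / Real.Gamma ((m : ℝ) - c + 1)) *
        (1 / (m.factorial : ℝ)) * (1 / ((N - m).factorial : ℝ)) := by
      unfold V₂
      rw [div_eq_mul_inv, mul_inv, mul_inv]
      ring
    have e1 : (∏ i ∈ Finset.range j, ((m : ℝ) - i)) * (1 / (m.factorial : ℝ))
        = 1 / Real.Gamma ((m : ℝ) - j + 1) := by
      rw [mul_one_div]; exact prod_div_factorial m j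
    have e2 : (∏ i ∈ Finset.range j, ((m : ℝ) - c - i)) * (1 / Real.Gamma ((m : ℝ) - c + 1))
        = 1 / Real.Gamma ((m : ℝ) - c + 1 - j) := by
      rw [hB, mul_one_div, div_eq_div_iff (mul_ne_zero hPa hΓ1) hΓ1]
      ring
    have e3 : (∏ i ∈ Finset.range (n - j), ((N : ℝ) - m - i)) * (1 / ((N - m).factorial : ℝ))
        = 1 / Real.Gamma ((N : ℝ) - m - (n - j : ℕ) + 1) := by
      have := prod_div_factorial (N - m) (n - j)
      rw [Nat.cast_sub hm] at this
      rw [mul_one_div]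
      convert this using 3 <;> ring
    have e4 : g₂ b c (N - n) ((m : ℤ) - j) = (-b) ^ m * ((-b) ^ j)⁻¹ *
        ((1 / Real.Gamma ((m : ℝ) - c + 1 - j)) * (1 / Real.Gamma ((m : ℝ) - j + 1)) *
         (1 / Real.Gamma ((N : ℝ) - m - (n - j : ℕ) + 1))) := by
      unfold g₂
      rw [zpow_sub₀ (by simp [hb.ne'] : (-b) ≠ 0), zpow_natCast, zpow_natCast]
      rw [show (((m : ℤ) - j : ℤ) : ℝ) = (m : ℝ) - j from by push_cast; ring]
      rw [show (m : ℝ) - j - c + 1 = (m : ℝ) - c + 1 - j from by ring]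
      rw [show ((N - n : ℕ) : ℝ) - ((m : ℝ) - j) + 1
          = (N : ℝ) - m - (n - j : ℕ) + 1 from by
        push_cast [Nat.cast_sub hj, Nat.cast_sub hnN]; ring]
      rw [div_div, div_eq_mul_inv, mul_inv, mul_inv, mul_inv]
      ring
    rw [zpow_neg, zpow_natCast, hsplit, e4]
    linear_combination
      (((-1 : ℝ)^j * (n.choose j : ℝ)) * ((-b)^m * ((-b)^j)⁻¹) *
        ((∏ i ∈ Finset.range j, ((m : ℝ) - i)) * (1 / (m.factorial : ℝ))) *
        ((∏ i ∈ Finset.range (n - j), ((N : ℝ) - m - i)) *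
          (1 / ((N - m).factorial : ℝ)))) * e2 +
      (((-1 : ℝ)^j * (n.choose j : ℝ)) * ((-b)^m * ((-b)^j)⁻¹) *
        (1 / Real.Gamma ((m : ℝ) - c + 1 - j)) *
        ((∏ i ∈ Finset.range (n - j), ((N : ℝ) - m - i)) *
          (1 / ((N - m).factorial : ℝ)))) * e1 +
      (((-1 : ℝ)^j * (n.choose j : ℝ)) * ((-b)^m * ((-b)^j)⁻¹) *
        (1 / Real.Gamma ((m : ℝ) - c + 1 - j)) *
        (1 / Real.Gamma ((m : ℝ) - j + 1))) * e3
lemma pow_div_factorial_le_exp (x : ℝ) (hx : 0 ≤ x) (s : ℕ) :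
    x ^ s / s.factorial ≤ Real.exp x := by
  have h := Real.sum_le_exp_of_nonneg hx (s + 1)
  refine le_trans ?_ h
  exact Finset.single_le_sum (f := fun i : ℕ => x ^ i / i.factorial)
    (fun i _ => by positivity) (Finset.self_mem_range_succ s)

set_option maxHeartbeats 1000000 in
lemma summable_dom (b A : ℝ) (hb : 0 < b) (hA : 0 ≤ A) (k : ℕ) :
    Summable (fun s : ℕ => (A + s) ^ k * (b ^ s / s.factorial)) := by
  have base : Summable (fun s : ℕ => (s : ℝ) ^ k * (1 / 2 : ℝ) ^ s) :=
    summable_pow_mul_geometric_of_norm_lt_one k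
      (by rw [Real.norm_eq_abs, abs_of_pos (by norm_num : (0:ℝ) < 1/2)]; norm_num)
  have shifted : Summable (fun s : ℕ => ((s + 1 : ℕ) : ℝ) ^ k * (1 / 2 : ℝ) ^ (s + 1)) :=
    (summable_nat_add_iff 1).2 base
  have dom := (shifted.mul_left ((A + 1) ^ k * (2 * Real.exp (2 * b))))
  apply dom.of_nonneg_of_le (fun s => by positivity)
  intro s
  have h1 : b ^ s / s.factorial ≤ Real.exp (2 * b) * (1 / 2 : ℝ) ^ s := by
    have h2 : (2 * b) ^ s / s.factorial ≤ Real.exp (2 * b) :=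
      pow_div_factorial_le_exp (2 * b) (by linarith) s
    have h4 : (0 : ℝ) < (2:ℝ) ^ s := by positivity
    have hf : (0:ℝ) < (s.factorial : ℝ) := by positivity
    rw [div_le_iff₀ hf] at h2 ⊢
    have key : b ^ s = ((2*b) ^ s) * (1 / 2 : ℝ) ^ s := by
      rw [mul_pow, one_div, inv_pow, mul_comm ((2:ℝ)^s) (b^s), mul_assoc,
        mul_inv_cancel₀ h4.ne', mul_one]
    rw [key]
    calc (2*b)^s * (1/2:ℝ)^s ≤ (Real.exp (2*b) * s.factorial) * (1/2:ℝ)^s :=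
      mul_le_mul_of_nonneg_right h2 (by positivity)
    _ = Real.exp (2 * b) * (1 / 2 : ℝ) ^ s * s.factorial := by ring
  have h5 : (A + s) ^ k ≤ ((A + 1) * (s + 1)) ^ k := by
    apply pow_le_pow_left₀ (by positivity)
    have : (0 : ℝ) ≤ s := Nat.cast_nonneg s
    nlinarith
  calc (A + s) ^ k * (b ^ s / s.factorial)
      ≤ ((A + 1) * (s + 1)) ^ k * (Real.exp (2 * b) * (1 / 2 : ℝ) ^ s) := by
        apply mul_le_mul h5 h1 (by positivity) (by positivity)
    _ = (A + 1) ^ k * (2 * Real.exp (2 * b)) * (((s + 1 : ℕ) : ℝ) ^ k * (1 / 2 : ℝ) ^ (s + 1)) := by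
        rw [mul_pow]
        push_cast
        ring
set_option maxHeartbeats 1000000 in
lemma g1_bound (b c : ℝ) (hb : 0 < b) (N n : ℕ) (hnN : n ≤ N) (hc : (N : ℝ) < c)
    (hcZ : ∀ z : ℤ, c ≠ z) (s : ℕ) :
    |g₁ b c (N - n) (s : ℤ)| ≤
      (1 / (Real.pi * (c - N) ^ (N - n + 1))) * (b ^ s / s.factorial) := by
  set D := N - n with hD
  have hDN : (D : ℝ) ≤ N := by
    have : D ≤ N := Nat.sub_le N n
    exact_mod_cast this
  have hcN : (0 : ℝ) < c - N := by linarith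
  set u : ℝ := (s : ℝ) + c - D with hu
  have hupos : 0 < u := by
    have h0 : (0 : ℝ) ≤ s := Nat.cast_nonneg s
    simp only [hu]; linarith
  have hΓu : 0 < Real.Gamma u := Real.Gamma_pos_of_pos hupos
  have h1u : (1 : ℝ) - u = (D : ℝ) - s - c + 1 := by simp only [hu]; ring
  have hΓ1u_ne : Real.Gamma ((D : ℝ) - s - c + 1) ≠ 0 :=
    gamma_nonint_ne (-c) (fun z hz => hcZ (-z) (by push_cast; linarith)) _
      ((D : ℤ) - s + 1) (by push_cast; ring)
  have hrefl := Real.Gamma_mul_Gamma_one_sub u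
  rw [h1u] at hrefl
  have hπ : (0 : ℝ) < Real.pi := Real.pi_pos
  have hsin_ne : Real.sin (Real.pi * u) ≠ 0 := by
    intro h
    rw [h, div_zero] at hrefl
    rcases mul_eq_zero.1 hrefl with h' | h'
    · exact hΓu.ne' h'
    · exact hΓ1u_ne h'
  rw [eq_div_iff hsin_ne] at hrefl
  have hval : Real.Gamma ((D : ℝ) - s - c + 1) =
      Real.pi / (Real.sin (Real.pi * u) * Real.Gamma u) := by
    rw [eq_div_iff (mul_ne_zero hsin_ne hΓu.ne')]
    linear_combination hrefl
  have hsin1 : |Real.sin (Real.pi * u)| ≤ 1 :=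
    abs_le.2 ⟨Real.neg_one_le_sin _, Real.sin_le_one _⟩
  have hinv : (|Real.Gamma ((D : ℝ) - s - c + 1)|)⁻¹ ≤ Real.Gamma u / Real.pi := by
    rw [hval, abs_div, abs_of_pos hπ, abs_mul, abs_of_pos hΓu, inv_div]
    calc |Real.sin (Real.pi * u)| * Real.Gamma u / Real.pi
        ≤ 1 * Real.Gamma u / Real.pi := by gcongr
      _ = Real.Gamma u / Real.pi := by rw [one_mul]
  have hgam : Real.Gamma ((s : ℝ) + c + 1) = (∏ i ∈ Finset.range (D + 1), (u + i)) *
      Real.Gamma u := by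
    have h := gamma_add_nat u hupos (D + 1)
    rw [show u + ((D + 1 : ℕ) : ℝ) = (s : ℝ) + c + 1 from by simp only [hu]; push_cast; ring] at h
    exact h
  have hprod : (c - N) ^ (D + 1) ≤ ∏ i ∈ Finset.range (D + 1), (u + i) := by
    calc (c - N) ^ (D + 1) = ∏ _i ∈ Finset.range (D + 1), (c - N) := by
          rw [Finset.prod_const, Finset.card_range]
      _ ≤ ∏ i ∈ Finset.range (D + 1), (u + i) := by
          apply Finset.prod_le_prod (fun i _ => hcN.le)
          intro i _
          have h0 : (0 : ℝ) ≤ s := Nat.cast_nonneg s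
          have h1 : (0 : ℝ) ≤ i := Nat.cast_nonneg i
          simp only [hu]
          linarith
  have hΓsc : 0 < Real.Gamma ((s : ℝ) + c + 1) := by
    have h0 : (0 : ℝ) ≤ s := Nat.cast_nonneg s
    apply Real.Gamma_pos_of_pos
    linarith
  have hb2 : (Real.Gamma ((s : ℝ) + c + 1))⁻¹ ≤ ((c - N) ^ (D + 1) * Real.Gamma u)⁻¹ := by
    apply inv_anti₀ (by positivity)
    rw [hgam]
    exact mul_le_mul_of_nonneg_right hprod hΓu.le
  have hgabs : |g₁ b c D (s : ℤ)| = b ^ s * ((s.factorial : ℝ))⁻¹ *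
      (Real.Gamma ((s : ℝ) + c + 1))⁻¹ * (|Real.Gamma ((D : ℝ) - s - c + 1)|)⁻¹ := by
    unfold g₁
    rw [zpow_natCast]
    push_cast
    rw [abs_div, abs_pow, abs_neg, abs_of_pos hb, abs_mul, abs_mul,
      abs_of_pos (Real.Gamma_pos_of_pos (by positivity : (0:ℝ) < (s : ℝ) + 1)),
      abs_of_pos hΓsc, Real.Gamma_nat_eq_factorial, div_eq_mul_inv, mul_inv, mul_inv]
    ring
  rw [hgabs]
  have hfac : (0:ℝ) < (s.factorial : ℝ) := by positivity
  calc b ^ s * ((s.factorial : ℝ))⁻¹ * (Real.Gamma ((s : ℝ) + c + 1))⁻¹ *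
        (|Real.Gamma ((D : ℝ) - s - c + 1)|)⁻¹
      ≤ b ^ s * ((s.factorial : ℝ))⁻¹ * ((c - N) ^ (D + 1) * Real.Gamma u)⁻¹ *
        (Real.Gamma u / Real.pi) := by
        apply mul_le_mul (mul_le_mul_of_nonneg_left hb2 (by positivity)) hinv
          (by positivity) (by positivity)
    _ = (1 / (Real.pi * (c - N) ^ (D + 1))) * (b ^ s / s.factorial) := by
        rw [mul_inv]
        field_simp
lemma summable_G (b c γ₁ : ℝ) (hb : 0 < b) (N n : ℕ) (hnN : n ≤ N) (hc : (N : ℝ) < c)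
    (hcZ : ∀ z : ℤ, c ≠ z) (k j : ℕ) :
    Summable (fun s : ℕ => (γ₁ + s + j) ^ k * g₁ b c (N - n) (s : ℤ)) := by
  have hK : (0 : ℝ) ≤ 1 / (Real.pi * (c - N) ^ (N - n + 1)) := by
    have h1 : (0:ℝ) < c - N := by linarith
    have := Real.pi_pos
    positivity
  have dom := (summable_dom b (|γ₁| + j) hb (by positivity) k).mul_left
    (1 / (Real.pi * (c - N) ^ (N - n + 1)))
  apply Summable.of_norm_bounded dom
  intro s
  rw [Real.norm_eq_abs, abs_mul, abs_pow]
  have habs : |γ₁ + s + j| ≤ |γ₁| + j + s := by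
    calc |γ₁ + s + j| ≤ |γ₁ + (s : ℝ)| + |(j : ℝ)| := abs_add_le _ _
      _ ≤ |γ₁| + |(s : ℝ)| + |(j : ℝ)| := by linarith [abs_add_le γ₁ (s : ℝ)]
      _ = |γ₁| + j + s := by
          rw [abs_of_nonneg (show (0:ℝ) ≤ (s:ℝ) from Nat.cast_nonneg s),
            abs_of_nonneg (show (0:ℝ) ≤ (j:ℝ) from Nat.cast_nonneg j)]; ring
  calc |γ₁ + s + j| ^ k * |g₁ b c (N - n) (s : ℤ)|
      ≤ (|γ₁| + j + s) ^ k *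
        ((1 / (Real.pi * (c - N) ^ (N - n + 1))) * (b ^ s / s.factorial)) := by
        apply mul_le_mul (pow_le_pow_left₀ (abs_nonneg _) habs k)
          (g1_bound b c hb N n hnN hc hcZ s) (abs_nonneg _) (by positivity)
    _ = (1 / (Real.pi * (c - N) ^ (N - n + 1))) * ((|γ₁| + j + s) ^ k * (b ^ s / s.factorial)) := by
        ring

lemma ortho₁ (b c γ₁ : ℝ) (hb : 0 < b) (N n : ℕ) (hnN : n ≤ N) (hc : (N : ℝ) < c)
    (hcZ : ∀ z : ℤ, c ≠ z) (k : ℕ) (hk : k < n) :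
    HasSum (fun m : ℕ => ∑ j ∈ Finset.range (n + 1),
      (-1 : ℝ) ^ j * (n.choose j : ℝ) * ((γ₁ + m) ^ k * g₁ b c (N - n) ((m : ℤ) - j))) 0 := by
  have hsummable : ∀ j : ℕ, Summable (fun s : ℕ => (-1 : ℝ) ^ j * (n.choose j : ℝ) *
      ((γ₁ + s + j) ^ k * g₁ b c (N - n) (s : ℤ))) := by
    intro j
    have := (summable_G b c γ₁ hb N n hnN hc hcZ k j).mul_left ((-1 : ℝ) ^ j * (n.choose j : ℝ))
    simpa [mul_assoc] using this
  have hsummand : ∀ j ∈ Finset.range (n + 1), HasSum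
      (fun m : ℕ => (-1 : ℝ) ^ j * (n.choose j : ℝ) * ((γ₁ + m) ^ k * g₁ b c (N - n) ((m : ℤ) - j)))
      (∑' s : ℕ, (-1 : ℝ) ^ j * (n.choose j : ℝ) * ((γ₁ + s + j) ^ k * g₁ b c (N - n) (s : ℤ))) := by
    intro j _
    have heq : (fun s : ℕ => (-1 : ℝ) ^ j * (n.choose j : ℝ) *
        ((γ₁ + ((s + j : ℕ) : ℝ)) ^ k * g₁ b c (N - n) (((s + j : ℕ) : ℤ) - j)))
        = fun s : ℕ => (-1 : ℝ) ^ j * (n.choose j : ℝ) *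
        ((γ₁ + s + j) ^ k * g₁ b c (N - n) (s : ℤ)) := by
      funext s
      rw [show ((s + j : ℕ) : ℤ) - (j : ℤ) = (s : ℤ) from by push_cast; ring,
        show γ₁ + ((s + j : ℕ) : ℝ) = γ₁ + s + j from by push_cast; ring]
    have h1 : HasSum (fun s : ℕ => (-1 : ℝ) ^ j * (n.choose j : ℝ) *
        ((γ₁ + ((s + j : ℕ) : ℝ)) ^ k * g₁ b c (N - n) (((s + j : ℕ) : ℤ) - j)))
        (∑' s : ℕ, (-1 : ℝ) ^ j * (n.choose j : ℝ) *
          ((γ₁ + s + j) ^ k * g₁ b c (N - n) (s : ℤ))) := by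
      rw [heq]
      exact (hsummable j).hasSum
    have h2 := (hasSum_nat_add_iff (f := fun m : ℕ => (-1 : ℝ) ^ j * (n.choose j : ℝ) *
      ((γ₁ + m) ^ k * g₁ b c (N - n) ((m : ℤ) - j))) j).1 h1
    rw [Finset.sum_eq_zero, add_zero] at h2
    · exact h2
    · intro i hi
      rw [g₁_neg b c (N - n) _ (by have := Finset.mem_range.1 hi; omega)]
      ring
  have htotal := hasSum_sum hsummand
  have hzero : (∑ j ∈ Finset.range (n + 1), ∑' s : ℕ, (-1 : ℝ) ^ j * (n.choose j : ℝ) *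
      ((γ₁ + s + j) ^ k * g₁ b c (N - n) (s : ℤ))) = 0 := by
    rw [← Summable.tsum_finsetSum (fun j _ => hsummable j)]
    have hterm : ∀ s : ℕ, (∑ j ∈ Finset.range (n + 1), (-1 : ℝ) ^ j * (n.choose j : ℝ) *
        ((γ₁ + s + j) ^ k * g₁ b c (N - n) (s : ℤ))) = 0 := by
      intro s
      have halt := alt_sum_pow n k hk (γ₁ + s)
      calc ∑ j ∈ Finset.range (n + 1), (-1 : ℝ) ^ j * (n.choose j : ℝ) *
            ((γ₁ + s + j) ^ k * g₁ b c (N - n) (s : ℤ))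
          = (∑ j ∈ Finset.range (n + 1), (-1 : ℝ) ^ j * (n.choose j : ℝ) * (γ₁ + s + j) ^ k) *
            g₁ b c (N - n) (s : ℤ) := by
            rw [Finset.sum_mul]
            apply Finset.sum_congr rfl
            intro j _
            ring
        _ = 0 := by rw [halt, zero_mul]
    rw [tsum_congr hterm, tsum_zero]
  rw [← hzero]
  exact htotal

lemma ortho₂ (b c γ₂ : ℝ) (hb : 0 < b) (N n : ℕ) (hnN : n ≤ N) (hc : (N : ℝ) < c)
    (hcZ : ∀ z : ℤ, c ≠ z) (k : ℕ) (hk : k < n) :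
    ∑ m ∈ Finset.range (N + 1), ∑ j ∈ Finset.range (n + 1),
      (-1 : ℝ) ^ j * (n.choose j : ℝ) * ((γ₂ + m) ^ k * g₂ b c (N - n) ((m : ℤ) - j)) = 0 := by
  rw [Finset.sum_comm]
  have hre : ∀ j ∈ Finset.range (n + 1),
      (∑ m ∈ Finset.range (N + 1), (-1 : ℝ) ^ j * (n.choose j : ℝ) *
        ((γ₂ + m) ^ k * g₂ b c (N - n) ((m : ℤ) - j)))
      = ∑ s ∈ Finset.range (N - n + 1), (-1 : ℝ) ^ j * (n.choose j : ℝ) *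
        ((γ₂ + s + j) ^ k * g₂ b c (N - n) (s : ℤ)) := by
    intro j hj
    have hjn : j ≤ n := by have := Finset.mem_range.1 hj; omega
    have hsub : (Finset.range (N - n + 1)).image (· + j) ⊆ Finset.range (N + 1) := by
      intro x hx
      rw [Finset.mem_image] at hx
      obtain ⟨s, hs, rfl⟩ := hx
      rw [Finset.mem_range] at hs ⊢
      omega
    have hz : ∀ x ∈ Finset.range (N + 1), x ∉ (Finset.range (N - n + 1)).image (· + j) →
        (-1 : ℝ) ^ j * (n.choose j : ℝ) * ((γ₂ + x) ^ k * g₂ b c (N - n) ((x : ℤ) - j)) = 0 := by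
      intro x _ hxnot
      rcases lt_or_ge x j with h1 | h1
      · rw [g₂_neg b c (N - n) _ (by omega)]
        ring
      · have h2 : N - n < x - j := by
          by_contra h3
          push_neg at h3
          exact hxnot (Finset.mem_image.2 ⟨x - j, Finset.mem_range.2 (by omega), by omega⟩)
        rw [g₂_big b c (N - n) _ (by omega)]
        ring
    rw [← Finset.sum_subset hsub hz, Finset.sum_image (by intro x _ y _ h; simp only at h; omega)]
    apply Finset.sum_congr rfl
    intro s _
    rw [show ((s + j : ℕ) : ℤ) - (j : ℤ) = (s : ℤ) from by push_cast; ring,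
      show γ₂ + ((s + j : ℕ) : ℝ) = γ₂ + s + j from by push_cast; ring]
  rw [Finset.sum_congr rfl hre, Finset.sum_comm]
  apply Finset.sum_eq_zero
  intro s _
  have halt := alt_sum_pow n k hk (γ₂ + s)
  calc ∑ j ∈ Finset.range (n + 1), (-1 : ℝ) ^ j * (n.choose j : ℝ) *
        ((γ₂ + s + j) ^ k * g₂ b c (N - n) (s : ℤ))
      = (∑ j ∈ Finset.range (n + 1), (-1 : ℝ) ^ j * (n.choose j : ℝ) * (γ₂ + s + j) ^ k) *
        g₂ b c (N - n) (s : ℤ) := by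
        rw [Finset.sum_mul]
        apply Finset.sum_congr rfl
        intro j _
        ring
    _ = 0 := by rw [halt, zero_mul]
def Ppoly (b γ₁ γ₂ : ℝ) (N n : ℕ) : Polynomial ℝ :=
  ∑ j ∈ Finset.range (n + 1),
    Polynomial.C ((-1 : ℝ) ^ j * (n.choose j : ℝ) * (-b) ^ (-(j : ℤ))) *
      (∏ i ∈ Finset.range j,
        ((Polynomial.X - Polynomial.C (γ₁ + i)) * (Polynomial.X - Polynomial.C (γ₂ + i)))) *
      (∏ i ∈ Finset.range (n - j), (Polynomial.C ((N : ℝ) + γ₂ - i) - Polynomial.X))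

lemma Ppoly_eval (b γ₁ γ₂ : ℝ) (N n : ℕ) (x : ℝ) :
    (Ppoly b γ₁ γ₂ N n).eval x = ∑ j ∈ Finset.range (n + 1),
      (-1 : ℝ) ^ j * (n.choose j : ℝ) * (-b) ^ (-(j : ℤ)) *
        (∏ i ∈ Finset.range j, ((x - γ₁ - (i : ℝ)) * (x - γ₂ - (i : ℝ)))) *
        ∏ i ∈ Finset.range (n - j), ((N : ℝ) - x + γ₂ - (i : ℝ)) := by
  unfold Ppoly
  rw [Polynomial.eval_finset_sum]
  apply Finset.sum_congr rfl
  intro j _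
  rw [Polynomial.eval_mul, Polynomial.eval_mul, Polynomial.eval_C,
    Polynomial.eval_prod, Polynomial.eval_prod]
  congr 1
  · congr 1
    apply Finset.prod_congr rfl
    intro i _
    rw [Polynomial.eval_mul, Polynomial.eval_sub, Polynomial.eval_sub,
      Polynomial.eval_X, Polynomial.eval_C, Polynomial.eval_C]
    ring
  · apply Finset.prod_congr rfl
    intro i _
    rw [Polynomial.eval_sub, Polynomial.eval_X, Polynomial.eval_C]
    ring

lemma Ppoly_degree (b γ₁ γ₂ : ℝ) (hb : 0 < b) (N n : ℕ) :
    (Ppoly b γ₁ γ₂ N n).degree = (2 * n : ℕ) := by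
  have hAmonic : ∀ j : ℕ, (∏ i ∈ Finset.range j,
      ((Polynomial.X - Polynomial.C (γ₁ + (i : ℝ))) *
       (Polynomial.X - Polynomial.C (γ₂ + (i : ℝ))))).Monic := by
    intro j
    apply Polynomial.monic_prod_of_monic
    intro i _
    exact (Polynomial.monic_X_sub_C _).mul (Polynomial.monic_X_sub_C _)
  have hAdeg : ∀ j : ℕ, (∏ i ∈ Finset.range j,
      ((Polynomial.X - Polynomial.C (γ₁ + (i : ℝ))) *
       (Polynomial.X - Polynomial.C (γ₂ + (i : ℝ))))).natDegree = 2 * j := by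
    intro j
    rw [Polynomial.natDegree_prod]
    · rw [Finset.sum_congr rfl (fun i _ => ?_), Finset.sum_const, Finset.card_range,
        smul_eq_mul, mul_comm]
      rw [Polynomial.natDegree_mul (Polynomial.X_sub_C_ne_zero _) (Polynomial.X_sub_C_ne_zero _),
        Polynomial.natDegree_X_sub_C, Polynomial.natDegree_X_sub_C]
    · intro i _
      exact mul_ne_zero (Polynomial.X_sub_C_ne_zero _) (Polynomial.X_sub_C_ne_zero _)
  have hBdeg : ∀ j : ℕ, (∏ i ∈ Finset.range (n - j),
      (Polynomial.C ((N : ℝ) + γ₂ - i) - Polynomial.X)).natDegree ≤ n - j := by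
    intro j
    apply le_trans (Polynomial.natDegree_prod_le _ _)
    have hBone : ∀ r : ℝ, (Polynomial.C r - Polynomial.X).natDegree ≤ 1 := by
      intro r
      apply le_trans (Polynomial.natDegree_sub_le _ _)
      simp [Polynomial.natDegree_X, Polynomial.natDegree_C]
    calc ∑ i ∈ Finset.range (n - j),
          (Polynomial.C ((N : ℝ) + γ₂ - i) - Polynomial.X).natDegree
        ≤ ∑ _i ∈ Finset.range (n - j), 1 := by
          apply Finset.sum_le_sum
          intro i _
          exact hBone _
      _ = n - j := by rw [Finset.sum_const, Finset.card_range, smul_eq_mul, mul_one]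
  have htermdeg : ∀ j : ℕ, j ≤ n → (Polynomial.C ((-1 : ℝ) ^ j * (n.choose j : ℝ) *
      (-b) ^ (-(j : ℤ))) *
      (∏ i ∈ Finset.range j,
        ((Polynomial.X - Polynomial.C (γ₁ + (i : ℝ))) *
         (Polynomial.X - Polynomial.C (γ₂ + (i : ℝ))))) *
      (∏ i ∈ Finset.range (n - j),
        (Polynomial.C ((N : ℝ) + γ₂ - i) - Polynomial.X))).natDegree ≤ n + j := by
    intro j hj
    apply le_trans (Polynomial.natDegree_mul_le)
    have h1 : (Polynomial.C ((-1 : ℝ) ^ j * (n.choose j : ℝ) * (-b) ^ (-(j : ℤ))) *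
        (∏ i ∈ Finset.range j,
          ((Polynomial.X - Polynomial.C (γ₁ + (i : ℝ))) *
           (Polynomial.X - Polynomial.C (γ₂ + (i : ℝ)))))).natDegree ≤ 2 * j := by
      apply le_trans (Polynomial.natDegree_mul_le)
      rw [Polynomial.natDegree_C, hAdeg j]
      omega
    have h2 := hBdeg j
    omega
  apply Polynomial.degree_eq_of_le_of_coeff_ne_zero
  · unfold Ppoly
    apply le_trans (Polynomial.degree_sum_le _ _)
    apply Finset.sup_le
    intro j hj
    apply le_trans (Polynomial.degree_le_natDegree)
    have := htermdeg j (by have := Finset.mem_range.1 hj; omega)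
    exact_mod_cast le_trans (by exact_mod_cast this) (by
      have : n + j ≤ 2 * n := by have := Finset.mem_range.1 hj; omega
      exact_mod_cast this)
  · unfold Ppoly
    rw [Polynomial.finset_sum_coeff]
    rw [Finset.sum_eq_single_of_mem n (Finset.self_mem_range_succ n)]
    · rw [Nat.sub_self]
      simp only [Finset.range_zero, Finset.prod_empty, mul_one]
      rw [Polynomial.coeff_C_mul]
      have h2n : (∏ i ∈ Finset.range n,
          ((Polynomial.X - Polynomial.C (γ₁ + (i : ℝ))) *
           (Polynomial.X - Polynomial.C (γ₂ + (i : ℝ))))).coeff (2 * n) = 1 := by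
        have := (hAmonic n).coeff_natDegree
        rwa [hAdeg n] at this
      rw [h2n, mul_one]
      apply mul_ne_zero
      apply mul_ne_zero
      · exact pow_ne_zero _ (by norm_num)
      · simp [Nat.choose_self]
      · exact zpow_ne_zero _ (by simp [hb.ne'])
    · intro j hj hjn
      apply Polynomial.coeff_eq_zero_of_natDegree_lt
      have h1 := htermdeg j (by have := Finset.mem_range.1 hj; omega)
      have h2 : j < n := lt_of_le_of_ne (by have := Finset.mem_range.1 hj; omega) hjn
      omega
end StmtAux14

end StmtAux14

open StmtAux14 in
set_option maxHeartbeats 1000000 in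
/-- The paper's Charlier–Kravchuk family (Case II, disjoint supports): the weights `W_1`
on `γ₁ + ℤ₊` and `W_2` on `γ₂ + {0,…,N}` have constant sign, the Rodrigues polynomial `P`
has degree exactly `2n`, and `P` is orthogonal to `x^k`, `k < n`, with respect to both
discrete measures. -/
theorem stmt_14 (b : ℝ) (hb : 0 < b) (N n : ℕ) (hnN : n ≤ N) (γ₁ γ₂ : ℝ)
    (hγN : γ₁ - γ₂ > N) (hγZ : ∀ z : ℤ, γ₁ - γ₂ ≠ (z : ℝ)) (W₁ W₂ : ℕ → ℝ)
    (hW₁ : ∀ m : ℕ, W₁ m = (-b) ^ m /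
      ((m.factorial : ℝ) * Real.Gamma ((m : ℝ) + γ₁ - γ₂ + 1) *
        Real.Gamma ((N : ℝ) - m - γ₁ + γ₂ + 1)))
    (hW₂ : ∀ m : ℕ, m ≤ N → W₂ m = (-b) ^ m /
      (Real.Gamma ((m : ℝ) + γ₂ - γ₁ + 1) * (m.factorial : ℝ) * ((N - m).factorial : ℝ)))
    (P : ℝ → ℝ)
    (hP : ∀ x : ℝ, P x = ∑ j ∈ Finset.range (n + 1),
      (-1 : ℝ) ^ j * (n.choose j : ℝ) * (-b) ^ (-(j : ℤ)) *
        (∏ i ∈ Finset.range j, ((x - γ₁ - (i : ℝ)) * (x - γ₂ - (i : ℝ)))) *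
        ∏ i ∈ Finset.range (n - j), ((N : ℝ) - x + γ₂ - (i : ℝ))) :
    (∀ m m' : ℕ, 0 < W₁ m * W₁ m') ∧
    (∀ m m' : ℕ, m ≤ N → m' ≤ N → 0 < W₂ m * W₂ m') ∧
    (∃ p : Polynomial ℝ, p.degree = (2 * n : ℕ) ∧ ∀ x : ℝ, P x = p.eval x) ∧
    (∀ k : ℕ, k < n →
      HasSum (fun m : ℕ => P (γ₁ + m) * (γ₁ + m) ^ k * W₁ m) 0 ∧
      ∑ m ∈ Finset.range (N + 1), P (γ₂ + m) * (γ₂ + m) ^ k * W₂ m = 0) := by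
  have hc : (N : ℝ) < γ₁ - γ₂ := hγN
  have hcZ : ∀ z : ℤ, γ₁ - γ₂ ≠ (z : ℝ) := hγZ
  have hW₁V : ∀ m : ℕ, W₁ m = V₁ b (γ₁ - γ₂) N m := by
    intro m
    rw [hW₁ m, show (m : ℝ) + γ₁ - γ₂ + 1 = (m : ℝ) + (γ₁ - γ₂) + 1 from by ring,
      show (N : ℝ) - m - γ₁ + γ₂ + 1 = (N : ℝ) - m - (γ₁ - γ₂) + 1 from by ring]
    rfl
  have hW₂V : ∀ m : ℕ, m ≤ N → W₂ m = V₂ b (γ₁ - γ₂) N m := by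
    intro m hm
    rw [hW₂ m hm, show (m : ℝ) + γ₂ - γ₁ + 1 = (m : ℝ) - (γ₁ - γ₂) + 1 from by ring]
    rfl
  refine ⟨?_, ?_, ?_, ?_⟩
  · intro m m'
    rw [hW₁V m, hW₁V m']
    exact V₁_sign b (γ₁ - γ₂) hb N hc hcZ m m'
  · intro m m' hm hm'
    rw [hW₂V m hm, hW₂V m' hm']
    exact V₂_sign b (γ₁ - γ₂) hb N hc hcZ m m' hm hm'
  · exact ⟨Ppoly b γ₁ γ₂ N n, Ppoly_degree b γ₁ γ₂ hb N n,
      fun x => (hP x).trans (Ppoly_eval b γ₁ γ₂ N n x).symm⟩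
  · intro k hk
    constructor
    · have hfun : (fun m : ℕ => P (γ₁ + m) * (γ₁ + m) ^ k * W₁ m)
          = fun m : ℕ => ∑ j ∈ Finset.range (n + 1), (-1 : ℝ) ^ j * (n.choose j : ℝ) *
            ((γ₁ + m) ^ k * g₁ b (γ₁ - γ₂) (N - n) ((m : ℤ) - j)) := by
        funext m
        rw [hP (γ₁ + m), hW₁V m, Finset.sum_mul, Finset.sum_mul]
        apply Finset.sum_congr rfl
        intro j hj
        have hj' : j ≤ n := by have := Finset.mem_range.1 hj; omega
        have hrod := rodrigues₁ b (γ₁ - γ₂) hb N n hnN hc hcZ m j hj'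
        rw [show ∏ i ∈ Finset.range j, ((γ₁ + (m : ℝ) - γ₁ - i) * (γ₁ + (m : ℝ) - γ₂ - i))
            = ∏ i ∈ Finset.range j, (((m : ℝ) - i) * ((m : ℝ) + (γ₁ - γ₂) - i)) from
          Finset.prod_congr rfl (fun i _ => by ring),
          show ∏ i ∈ Finset.range (n - j), ((N : ℝ) - (γ₁ + m) + γ₂ - i)
            = ∏ i ∈ Finset.range (n - j), ((N : ℝ) - m - (γ₁ - γ₂) - i) from
          Finset.prod_congr rfl (fun i _ => by ring)]
        linear_combination ((γ₁ + (m : ℝ)) ^ k) * hrod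
      rw [hfun]
      exact ortho₁ b (γ₁ - γ₂) γ₁ hb N n hnN hc hcZ k hk
    · have hsum : ∑ m ∈ Finset.range (N + 1), P (γ₂ + m) * (γ₂ + m) ^ k * W₂ m
          = ∑ m ∈ Finset.range (N + 1), ∑ j ∈ Finset.range (n + 1),
            (-1 : ℝ) ^ j * (n.choose j : ℝ) *
            ((γ₂ + m) ^ k * g₂ b (γ₁ - γ₂) (N - n) ((m : ℤ) - j)) := by
        apply Finset.sum_congr rfl
        intro m hm
        have hmN : m ≤ N := by have := Finset.mem_range.1 hm; omega
        rw [hP (γ₂ + m), hW₂V m hmN, Finset.sum_mul, Finset.sum_mul]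
        apply Finset.sum_congr rfl
        intro j hj
        have hj' : j ≤ n := by have := Finset.mem_range.1 hj; omega
        have hrod := rodrigues₂ b (γ₁ - γ₂) hb N n hnN hc hcZ m j hj' hmN
        rw [show ∏ i ∈ Finset.range j, ((γ₂ + (m : ℝ) - γ₁ - i) * (γ₂ + (m : ℝ) - γ₂ - i))
            = ∏ i ∈ Finset.range j, (((m : ℝ) - (γ₁ - γ₂) - i) * ((m : ℝ) - i)) from
          Finset.prod_congr rfl (fun i _ => by ring),
          show ∏ i ∈ Finset.range (n - j), ((N : ℝ) - (γ₂ + m) + γ₂ - i)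
            = ∏ i ∈ Finset.range (n - j), ((N : ℝ) - m - i) from
          Finset.prod_congr rfl (fun i _ => by ring)]
        linear_combination ((γ₂ + (m : ℝ)) ^ k) * hrod
      rw [hsum]
      exact ortho₂ b (γ₁ - γ₂) γ₂ hb N n hnN hc hcZ k hk
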